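/- Let f : ℝ^{d_x} × ℝ^{d_y} → ℝ be differentiable and (μ_x, μ_y)-strongly-convex–strongly-concave with (L_x, L_y, L_{xy})-Lipschitz partial gradients, let g̃_x, g̃_y be inexact partial gradients with relative error α ∈ [0,1), let (x*, y*) be a saddle point (∇_x f(x*,y*) = 0 and ∇_y f(x*,y*) = 0), and let step sizes η_x, η_y > 0 satisfy max{η_x, η_y} ≤ (1/(2(α + (1 + α)²)))·min{1/L_x, 1/L_y}. Then the Inexact Sim-GDA iterates (x^k, y^k) with steps (η_x, η_y) satisfy, for every k: (1/η_x)·‖x^{k+1} − x*‖² + (1/η_y)·‖y^{k+1} − y*‖² ≤ (1/η_x + α/max{η_x, η_y} − μ_x + 2·max{η_x, η_y}·((1 + α)² + α)·L_{xy}²)·‖x^k − x*‖² + (1/η_y + α/max{η_x, η_y} − μ_y + 2·max{η_x, η_y}·((1 + α)² + α)·L_{xy}²)·‖y^k − y*‖². -/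

import Mathlib

open scoped RealInnerProductSpace

open Set Filter Topology

variable {E : Type*} [NormedAddCommGroup E] [InnerProductSpace ℝ E] [CompleteSpace E]

lemma aux_hasGradientAt_neg {h : E → ℝ} {g p : E} (hg : HasGradientAt h g p) :
    HasGradientAt (fun z => -h z) (-g) p := by
  rw [hasGradientAt_iff_hasFDerivAt] at hg ⊢
  rw [map_neg]; exact hg.neg

lemma aux_hasDerivAt_line (h : E → ℝ) (p d : E) (t : ℝ) {g : E}
    (hg : HasGradientAt h g (p + t • d)) :
    HasDerivAt (fun s : ℝ => h (p + s • d)) ⟪g, d⟫ t := by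
  have hline : HasDerivAt (fun s : ℝ => p + s • d) d t := by
    simpa using ((hasDerivAt_id t).smul_const d).const_add p
  have := hg.hasFDerivAt.comp_hasDerivAt t hline
  simpa [InnerProductSpace.toDual_apply_apply, Function.comp_def] using this

lemma aux_grad_ineq (h : E → ℝ) {μ : ℝ} (hc : StrongConvexOn Set.univ μ h) {p g : E}
    (hg : HasGradientAt h g p) (q : E) :
    h p + ⟪g, q - p⟫ + μ / 2 * ‖q - p‖ ^ 2 ≤ h q := by
  set d := q - p with hd
  have hφ : HasDerivAt (fun s : ℝ => h (p + s • d)) ⟪g, d⟫ 0 := by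
    apply aux_hasDerivAt_line
    simpa using hg
  have slope_bound : ∀ t : ℝ, t ∈ Set.Ioc (0:ℝ) 1 →
      (h (p + t • d) - h p) / t ≤ h q - h p - (1 - t) * (μ / 2 * ‖d‖ ^ 2) := by
    intro t ht
    obtain ⟨ht0, ht1⟩ := ht
    have hcomb := hc.2 (Set.mem_univ q) (Set.mem_univ p) ht0.le (by linarith : (0:ℝ) ≤ 1 - t)
      (by ring)
    have hpt : t • q + (1 - t) • p = p + t • d := by
      rw [hd]; module
    rw [hpt] at hcomb
    have hnorm : ‖q - p‖ = ‖d‖ := by rw [hd]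
    rw [div_le_iff₀ ht0]
    simp only [smul_eq_mul, hnorm] at hcomb
    nlinarith [hcomb]
  have hslope : Tendsto (fun t : ℝ => (h (p + t • d) - h p) / t) (𝓝[>] 0) (𝓝 ⟪g, d⟫) := by
    have := hasDerivAt_iff_tendsto_slope.1 hφ
    have h2 : Tendsto (slope (fun s : ℝ => h (p + s • d)) 0) (𝓝[>] 0) (𝓝 ⟪g, d⟫) :=
      this.mono_left (nhdsWithin_mono _ (fun t ht => ne_of_gt ht))
    refine h2.congr (fun t => ?_)
    simp [slope_def_field, div_eq_inv_mul]
  have hrhs : Tendsto (fun t : ℝ => h q - h p - (1 - t) * (μ / 2 * ‖d‖ ^ 2)) (𝓝[>] 0)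
      (𝓝 (h q - h p - μ / 2 * ‖d‖ ^ 2)) := by
    have : Continuous fun t : ℝ => h q - h p - (1 - t) * (μ / 2 * ‖d‖ ^ 2) := by continuity
    have h3 : Tendsto (fun t : ℝ => h q - h p - (1 - t) * (μ / 2 * ‖d‖ ^ 2)) (𝓝[>] 0)
        (𝓝 (h q - h p - (1 - 0) * (μ / 2 * ‖d‖ ^ 2))) :=
      (this.tendsto 0).mono_left nhdsWithin_le_nhds
    simpa using h3
  have hle : ⟪g, d⟫ ≤ h q - h p - μ / 2 * ‖d‖ ^ 2 := by
    refine le_of_tendsto_of_tendsto hslope hrhs ?_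
    filter_upwards [Ioc_mem_nhdsGT_of_mem (by norm_num : (0:ℝ) ∈ Set.Ico (0:ℝ) 1)] with t ht
    exact slope_bound t ht
  linarith

lemma aux_descent (h : E → ℝ) {L : ℝ} (hL : 0 ≤ L) {G : E → E}
    (hG : ∀ z, HasGradientAt h (G z) z)
    (hlip : ∀ u v, ‖G u - G v‖ ≤ L * ‖u - v‖) (u v : E) :
    h u ≤ h v + ⟪G v, u - v⟫ + L / 2 * ‖u - v‖ ^ 2 := by
  set d := u - v with hdd
  set ψ : ℝ → ℝ := fun t => h (v + t • d) - t * ⟪G v, d⟫ - L * t ^ 2 / 2 * ‖d‖ ^ 2 with hψ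
  have hderiv : ∀ t : ℝ, HasDerivAt ψ
      (⟪G (v + t • d), d⟫ - ⟪G v, d⟫ - L * t * ‖d‖ ^ 2) t := by
    intro t
    have h1 := aux_hasDerivAt_line h v d t (hG _)
    have h2 : HasDerivAt (fun t : ℝ => t * ⟪G v, d⟫) ⟪G v, d⟫ t := by
      simpa using (hasDerivAt_id t).mul_const ⟪G v, d⟫
    have h3' : HasDerivAt (fun t : ℝ => t ^ 2) (2 * t) t := by
      simpa using hasDerivAt_pow 2 t
    have h3 : HasDerivAt (fun t : ℝ => L * t ^ 2 / 2 * ‖d‖ ^ 2) (L * t * ‖d‖ ^ 2) t := by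
      have := ((h3'.const_mul L).div_const 2).mul_const (‖d‖ ^ 2)
      rw [show L * t * ‖d‖ ^ 2 = L * (2 * t) / 2 * ‖d‖ ^ 2 by ring]
      exact this
    exact (h1.sub h2).sub h3
  have hcont : Continuous ψ := by
    have : Differentiable ℝ ψ := fun t => (hderiv t).differentiableAt
    exact this.continuous
  have hanti : AntitoneOn ψ (Set.Icc (0:ℝ) 1) := by
    apply antitoneOn_of_deriv_nonpos (convex_Icc 0 1) hcont.continuousOn
    · intro t _
      exact (hderiv t).differentiableAt.differentiableWithinAt
    · intro t ht
      rw [interior_Icc] at ht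
      rw [(hderiv t).deriv]
      have h4 : ⟪G (v + t • d) - G v, d⟫ ≤ ‖G (v + t • d) - G v‖ * ‖d‖ :=
        real_inner_le_norm _ _
      have h5 : ‖G (v + t • d) - G v‖ ≤ L * (t * ‖d‖) := by
        have := hlip (v + t • d) v
        simpa [norm_smul, abs_of_pos ht.1] using this
      have h6 : ⟪G (v + t • d) - G v, d⟫ = ⟪G (v + t • d), d⟫ - ⟪G v, d⟫ :=
        inner_sub_left _ _ _
      nlinarith [norm_nonneg d, norm_nonneg (G (v + t • d) - G v), ht.1.le]
  have hfin := hanti (Set.left_mem_Icc.2 (by norm_num)) (Set.right_mem_Icc.2 (by norm_num))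
    (by norm_num : (0:ℝ) ≤ 1)
  have hψ0 : ψ 0 = h v := by simp [hψ]
  have hψ1 : ψ 1 = h u - ⟪G v, d⟫ - L / 2 * ‖d‖ ^ 2 := by
    simp [hψ, hdd]
  rw [hψ0, hψ1] at hfin
  linarith

lemma aux_coco (h : E → ℝ) {μ L : ℝ} (hμ : 0 ≤ μ) (hL : 0 < L)
    (hc : StrongConvexOn Set.univ μ h) {G : E → E}
    (hG : ∀ z, HasGradientAt h (G z) z)
    (hlip : ∀ u v, ‖G u - G v‖ ≤ L * ‖u - v‖) (p q : E) :
    1 / (2 * L) * ‖G q - G p‖ ^ 2 ≤ h q - h p - ⟪G p, q - p⟫ := by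
  set w := G q - G p with hw
  set r := q - (1 / L) • w with hr
  have h1 : h r ≤ h q + ⟪G q, r - q⟫ + L / 2 * ‖r - q‖ ^ 2 := aux_descent h hL.le hG hlip r q
  have h2 : h p + ⟪G p, r - p⟫ + μ / 2 * ‖r - p‖ ^ 2 ≤ h r := aux_grad_ineq h hc (hG p) r
  have e1 : r - q = -((1 / L) • w) := by rw [hr]; abel
  have e2 : ⟪G q, r - q⟫ = -(1 / L * ⟪G q, w⟫) := by
    rw [e1, inner_neg_right, real_inner_smul_right]
  have e3 : ‖r - q‖ ^ 2 = (1 / L) ^ 2 * ‖w‖ ^ 2 := by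
    rw [e1, norm_neg, norm_smul]
    rw [Real.norm_eq_abs, abs_of_pos (by positivity : (0:ℝ) < 1 / L)]
    ring
  have e4 : r - p = (q - p) - (1 / L) • w := by rw [hr]; abel
  have e5 : ⟪G p, r - p⟫ = ⟪G p, q - p⟫ - 1 / L * ⟪G p, w⟫ := by
    rw [e4, inner_sub_right, real_inner_smul_right]
  have e6 : ⟪G q, w⟫ - ⟪G p, w⟫ = ‖w‖ ^ 2 := by
    rw [← inner_sub_left, ← hw, real_inner_self_eq_norm_sq]
  have hμr : 0 ≤ μ / 2 * ‖r - p‖ ^ 2 := by positivity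
  rw [e2, e3] at h1
  rw [e5] at h2
  have hL2 : L / 2 * ((1 / L) ^ 2 * ‖w‖ ^ 2) = 1 / (2 * L) * ‖w‖ ^ 2 := by
    field_simp
  have hinv : 1 / L * ⟪G q, w⟫ - 1 / L * ⟪G p, w⟫ = 1 / L * ‖w‖ ^ 2 := by
    rw [← mul_sub, e6]
  have hfrac : 1 / L * ‖w‖ ^ 2 - 1 / (2 * L) * ‖w‖ ^ 2 = 1 / (2 * L) * ‖w‖ ^ 2 := by
    field_simp; ring
  linarith


set_option maxHeartbeats 1000000 in
/-- Lemma (one-step Lyapunov contraction of Inexact Sim-GDA for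
strongly-convex–strongly-concave `f` with componentwise Lipschitz partial
gradients and relative gradient error `α`). -/
theorem stmt_15 {dx dy : ℕ} (μx μy Lx Ly Lxy : ℝ)
    (hμx : 0 ≤ μx) (hLx : μx ≤ Lx) (hμy : 0 ≤ μy) (hLy : μy ≤ Ly) (hLxy : 0 ≤ Lxy)
    (f : EuclideanSpace ℝ (Fin dx) → EuclideanSpace ℝ (Fin dy) → ℝ)
    (hf : Differentiable ℝ (fun p : EuclideanSpace ℝ (Fin dx) × EuclideanSpace ℝ (Fin dy) => f p.1 p.2))
    (gx : EuclideanSpace ℝ (Fin dx) → EuclideanSpace ℝ (Fin dy) → EuclideanSpace ℝ (Fin dx))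
    (gy : EuclideanSpace ℝ (Fin dx) → EuclideanSpace ℝ (Fin dy) → EuclideanSpace ℝ (Fin dy))
    (hgx : ∀ x y, gx x y = gradient (fun x' => f x' y) x)
    (hgy : ∀ x y, gy x y = gradient (fun y' => f x y') y)
    (hconv : ∀ y, StrongConvexOn Set.univ μx (fun x => f x y))
    (hconc : ∀ x, StrongConcaveOn Set.univ μy (f x))
    (hLxx : ∀ x₁ x₂ y, ‖gx x₁ y - gx x₂ y‖ ≤ Lx * ‖x₁ - x₂‖)
    (hLxy' : ∀ x y₁ y₂, ‖gx x y₁ - gx x y₂‖ ≤ Lxy * ‖y₁ - y₂‖)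
    (hLyy : ∀ x y₁ y₂, ‖gy x y₁ - gy x y₂‖ ≤ Ly * ‖y₁ - y₂‖)
    (hLyx : ∀ x₁ x₂ y, ‖gy x₁ y - gy x₂ y‖ ≤ Lxy * ‖x₁ - x₂‖)
    (α : ℝ) (hα₀ : 0 ≤ α) (hα₁ : α < 1)
    (gtx : EuclideanSpace ℝ (Fin dx) → EuclideanSpace ℝ (Fin dy) → EuclideanSpace ℝ (Fin dx))
    (gty : EuclideanSpace ℝ (Fin dx) → EuclideanSpace ℝ (Fin dy) → EuclideanSpace ℝ (Fin dy))
    (hrel : ∀ x y, ‖gtx x y - gx x y‖ ^ 2 + ‖gty x y - gy x y‖ ^ 2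
      ≤ α ^ 2 * (‖gx x y‖ ^ 2 + ‖gy x y‖ ^ 2))
    (xstar : EuclideanSpace ℝ (Fin dx)) (ystar : EuclideanSpace ℝ (Fin dy))
    (hstar : gx xstar ystar = 0 ∧ gy xstar ystar = 0)
    (ηx ηy : ℝ) (hηx : 0 < ηx) (hηy : 0 < ηy)
    (hstep : max ηx ηy ≤ 1 / (2 * (α + (1 + α) ^ 2)) * min (1 / Lx) (1 / Ly))
    (x : ℕ → EuclideanSpace ℝ (Fin dx)) (y : ℕ → EuclideanSpace ℝ (Fin dy))
    (hxit : ∀ k, x (k + 1) = x k - ηx • gtx (x k) (y k))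
    (hyit : ∀ k, y (k + 1) = y k + ηy • gty (x k) (y k)) :
    ∀ k, (1 / ηx) * ‖x (k + 1) - xstar‖ ^ 2 + (1 / ηy) * ‖y (k + 1) - ystar‖ ^ 2
      ≤ (1 / ηx + α / max ηx ηy - μx
            + 2 * max ηx ηy * ((1 + α) ^ 2 + α) * Lxy ^ 2) * ‖x k - xstar‖ ^ 2
        + (1 / ηy + α / max ηx ηy - μy
            + 2 * max ηx ηy * ((1 + α) ^ 2 + α) * Lxy ^ 2) * ‖y k - ystar‖ ^ 2 := by
  obtain ⟨hst1, hst2⟩ := hstar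
  -- differentiability of partial maps
  have hdfx : ∀ Y0, Differentiable ℝ (fun x' => f x' Y0) := by
    intro Y0
    exact hf.comp (differentiable_id.prodMk (differentiable_const Y0))
  have hdfy : ∀ X0, Differentiable ℝ (fun y' => f X0 y') := by
    intro X0
    exact hf.comp ((differentiable_const X0).prodMk differentiable_id)
  have hGradx : ∀ X0 Y0, HasGradientAt (fun x' => f x' Y0) (gx X0 Y0) X0 := by
    intro X0 Y0; rw [hgx]; exact ((hdfx Y0) X0).hasGradientAt
  have hGrady : ∀ X0 Y0, HasGradientAt (fun y' => f X0 y') (gy X0 Y0) Y0 := by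
    intro X0 Y0; rw [hgy]; exact ((hdfy X0) Y0).hasGradientAt
  have hGradny : ∀ X0 Y0, HasGradientAt (fun y' => -(f X0 y')) (-(gy X0 Y0)) Y0 :=
    fun X0 Y0 => aux_hasGradientAt_neg (hGrady X0 Y0)
  have hconvny : ∀ X0, StrongConvexOn Set.univ μy (fun y' => -(f X0 y')) :=
    fun X0 => UniformConcaveOn.neg (hconc X0)
  have hlipny : ∀ X0, ∀ u v : EuclideanSpace ℝ (Fin dy),
      ‖(-(gy X0 u)) - (-(gy X0 v))‖ ≤ Ly * ‖u - v‖ := by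
    intro X0 u v
    have h := hLyy X0 u v
    rw [neg_sub_neg]
    rwa [norm_sub_rev]
  -- basic positivity
  have hηpos : 0 < max ηx ηy := lt_of_lt_of_le hηx (le_max_left _ _)
  have hCpos : 0 < (1 + α) ^ 2 + α := by nlinarith
  have hLxnn : 0 ≤ Lx := le_trans hμx hLx
  have hLynn : 0 ≤ Ly := le_trans hμy hLy
  have hLx0 : 0 < Lx := by
    rcases hLxnn.lt_or_eq with h | h
    · exact h
    · exfalso
      have h1 : (1:ℝ)/Lx = 0 := by rw [← h]; simp
      have h2 : min (1/Lx) (1/Ly) ≤ 0 := le_trans (min_le_left _ _) (le_of_eq h1)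
      have h3 : (0:ℝ) < 1 / (2 * (α + (1 + α) ^ 2)) := by positivity
      nlinarith [hstep, hηpos]
  have hLy0 : 0 < Ly := by
    rcases hLynn.lt_or_eq with h | h
    · exact h
    · exfalso
      have h1 : (1:ℝ)/Ly = 0 := by rw [← h]; simp
      have h2 : min (1/Lx) (1/Ly) ≤ 0 := le_trans (min_le_right _ _) (le_of_eq h1)
      have h3 : (0:ℝ) < 1 / (2 * (α + (1 + α) ^ 2)) := by positivity
      nlinarith [hstep, hηpos]
  set η := max ηx ηy with hηdef
  -- step size consequences
  have hsx : η * ((1 + α) ^ 2 + α) ≤ 1 / (2 * Lx) := by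
    have h1 : η ≤ 1 / (2 * ((1 + α) ^ 2 + α)) * (1 / Lx) := by
      refine le_trans hstep ?_
      have e : α + (1 + α) ^ 2 = (1 + α) ^ 2 + α := by ring
      rw [e]
      exact mul_le_mul_of_nonneg_left (min_le_left _ _) (by positivity)
    have h2 := mul_le_mul_of_nonneg_right h1 hCpos.le
    calc η * ((1 + α) ^ 2 + α) ≤ 1 / (2 * ((1 + α) ^ 2 + α)) * (1 / Lx) * ((1 + α) ^ 2 + α) := h2
      _ = 1 / (2 * Lx) := by field_simp
  have hsy : η * ((1 + α) ^ 2 + α) ≤ 1 / (2 * Ly) := by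
    have h1 : η ≤ 1 / (2 * ((1 + α) ^ 2 + α)) * (1 / Ly) := by
      refine le_trans hstep ?_
      have e : α + (1 + α) ^ 2 = (1 + α) ^ 2 + α := by ring
      rw [e]
      exact mul_le_mul_of_nonneg_left (min_le_right _ _) (by positivity)
    have h2 := mul_le_mul_of_nonneg_right h1 hCpos.le
    calc η * ((1 + α) ^ 2 + α) ≤ 1 / (2 * ((1 + α) ^ 2 + α)) * (1 / Ly) * ((1 + α) ^ 2 + α) := h2
      _ = 1 / (2 * Ly) := by field_simp
  intro k
  -- inner product flips
  have flipx : ∀ g : EuclideanSpace ℝ (Fin dx), ⟪g, xstar - x k⟫ = -⟪x k - xstar, g⟫ := by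
    intro g
    rw [show xstar - x k = -(x k - xstar) by abel, inner_neg_right, real_inner_comm]
  have flipy : ∀ g : EuclideanSpace ℝ (Fin dy), ⟪g, ystar - y k⟫ = -⟪y k - ystar, g⟫ := by
    intro g
    rw [show ystar - y k = -(y k - ystar) by abel, inner_neg_right, real_inner_comm]
  have nflipx : ‖xstar - x k‖ = ‖x k - xstar‖ := norm_sub_rev _ _
  have nflipy : ‖ystar - y k‖ = ‖y k - ystar‖ := norm_sub_rev _ _
  -- one-step expansions
  have keyx : (1/ηx) * ‖x (k+1) - xstar‖^2
      = (1/ηx) * ‖x k - xstar‖^2 - 2*⟪x k - xstar, gtx (x k) (y k)⟫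
        + ηx * ‖gtx (x k) (y k)‖^2 := by
    have e0 : x (k+1) - xstar = (x k - xstar) - ηx • gtx (x k) (y k) := by
      rw [hxit k]; abel
    have e1 : ‖x (k+1) - xstar‖^2 = ‖x k - xstar‖^2
        - 2*(ηx * ⟪x k - xstar, gtx (x k) (y k)⟫) + ηx^2 * ‖gtx (x k) (y k)‖^2 := by
      rw [e0, norm_sub_sq_real, real_inner_smul_right, norm_smul, Real.norm_eq_abs, mul_pow,
        sq_abs]
    rw [e1]
    field_simp
  have keyy : (1/ηy) * ‖y (k+1) - ystar‖^2
      = (1/ηy) * ‖y k - ystar‖^2 + 2*⟪y k - ystar, gty (x k) (y k)⟫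
        + ηy * ‖gty (x k) (y k)‖^2 := by
    have e0 : y (k+1) - ystar = (y k - ystar) + ηy • gty (x k) (y k) := by
      rw [hyit k]; abel
    have e1 : ‖y (k+1) - ystar‖^2 = ‖y k - ystar‖^2
        + 2*(ηy * ⟪y k - ystar, gty (x k) (y k)⟫) + ηy^2 * ‖gty (x k) (y k)‖^2 := by
      rw [e0, norm_add_sq_real, real_inner_smul_right, norm_smul, Real.norm_eq_abs, mul_pow,
        sq_abs]
    rw [e1]
    field_simp
  -- inner product splits
  have hsplitx : ⟪x k - xstar, gtx (x k) (y k)⟫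
      = ⟪x k - xstar, gx (x k) (y k)⟫ + ⟪x k - xstar, gtx (x k) (y k) - gx (x k) (y k)⟫ := by
    rw [inner_sub_right]; ring
  have hsplity : ⟪y k - ystar, gty (x k) (y k)⟫
      = ⟪y k - ystar, gy (x k) (y k)⟫ + ⟪y k - ystar, gty (x k) (y k) - gy (x k) (y k)⟫ := by
    rw [inner_sub_right]; ring
  -- four strong-convexity (Bregman) lower bounds
  have J1 : μx/2 * ‖x k - xstar‖^2 ≤ f xstar (y k) - f (x k) (y k)
      + ⟪x k - xstar, gx (x k) (y k)⟫ := by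
    have H := aux_grad_ineq (fun x' => f x' (y k)) (hconv (y k)) (hGradx (x k) (y k)) xstar
    rw [flipx, nflipx] at H
    linarith
  have J2 : μx/2 * ‖x k - xstar‖^2 ≤ f (x k) ystar - f xstar ystar := by
    have H := aux_grad_ineq (fun x' => f x' ystar) (hconv ystar) (hGradx xstar ystar) (x k)
    rw [hst1] at H
    simp only [inner_zero_left] at H
    linarith
  have J3 : μy/2 * ‖y k - ystar‖^2 ≤ -f (x k) ystar + f (x k) (y k)
      - ⟪y k - ystar, gy (x k) (y k)⟫ := by
    have H := aux_grad_ineq (fun y' => -f (x k) y') (hconvny (x k)) (hGradny (x k) (y k)) ystar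
    rw [flipy, nflipy, inner_neg_right] at H
    linarith
  have J4 : μy/2 * ‖y k - ystar‖^2 ≤ -f xstar (y k) + f xstar ystar := by
    have H := aux_grad_ineq (fun y' => -f xstar y') (hconvny xstar) (hGradny xstar ystar) (y k)
    rw [hst2] at H
    simp only [neg_neg, inner_zero_left, neg_zero] at H
    linarith
  have hSmu : μx * ‖x k - xstar‖^2 + μy * ‖y k - ystar‖^2
      ≤ ⟪x k - xstar, gx (x k) (y k)⟫ - ⟪y k - ystar, gy (x k) (y k)⟫ := by
    linarith only [J1, J2, J3, J4]
  -- four cocoercivity lower bounds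
  have K1 : 1/(2*Lx) * ‖gx (x k) (y k) - gx xstar (y k)‖^2 ≤ f xstar (y k) - f (x k) (y k)
      + ⟪x k - xstar, gx (x k) (y k)⟫ := by
    have H := aux_coco (fun x' => f x' (y k)) hμx hLx0 (hconv (y k))
      (fun z => hGradx z (y k)) (fun u v => hLxx u v (y k)) (x k) xstar
    rw [flipx] at H
    rw [norm_sub_rev] at H
    linarith
  have K2 : 1/(2*Lx) * ‖gx (x k) ystar‖^2 ≤ f (x k) ystar - f xstar ystar := by
    have H := aux_coco (fun x' => f x' ystar) hμx hLx0 (hconv ystar)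
      (fun z => hGradx z ystar) (fun u v => hLxx u v ystar) xstar (x k)
    rw [hst1] at H
    simp only [inner_zero_left, sub_zero] at H
    linarith
  have K3 : 1/(2*Ly) * ‖gy (x k) (y k) - gy (x k) ystar‖^2 ≤ -f (x k) ystar + f (x k) (y k)
      - ⟪y k - ystar, gy (x k) (y k)⟫ := by
    have H := aux_coco (fun y' => -f (x k) y') hμy hLy0 (hconvny (x k))
      (fun z => hGradny (x k) z) (hlipny (x k)) (y k) ystar
    rw [flipy, inner_neg_right, neg_sub_neg] at H
    simp only [neg_neg] at H
    linarith
  have K4 : 1/(2*Ly) * ‖gy xstar (y k)‖^2 ≤ -f xstar (y k) + f xstar ystar := by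
    have H := aux_coco (fun y' => -f xstar y') hμy hLy0 (hconvny xstar)
      (fun z => hGradny xstar z) (hlipny xstar) ystar (y k)
    rw [hst2] at H
    simp only [neg_zero, neg_sub_neg, zero_sub, norm_neg, inner_zero_left, sub_zero] at H
    linarith
  have hScoco : 1/(2*Lx) * (‖gx (x k) (y k) - gx xstar (y k)‖^2 + ‖gx (x k) ystar‖^2)
      + 1/(2*Ly) * (‖gy (x k) (y k) - gy (x k) ystar‖^2 + ‖gy xstar (y k)‖^2)
      ≤ ⟪x k - xstar, gx (x k) (y k)⟫ - ⟪y k - ystar, gy (x k) (y k)⟫ := by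
    linarith only [K1, K2, K3, K4]
  -- gradient norm bounds via Lipschitz cross terms
  have t1 : ‖gx xstar (y k)‖ ≤ Lxy * ‖y k - ystar‖ := by
    have h := hLxy' xstar (y k) ystar
    rwa [hst1, sub_zero] at h
  have hna : ‖gx (x k) (y k)‖ ≤ ‖gx (x k) (y k) - gx xstar (y k)‖ + Lxy * ‖y k - ystar‖ := by
    have h2 : ‖gx (x k) (y k)‖ ≤ ‖gx (x k) (y k) - gx xstar (y k)‖ + ‖gx xstar (y k)‖ := by
      have := norm_add_le (gx (x k) (y k) - gx xstar (y k)) (gx xstar (y k))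
      simpa using this
    linarith only [h2, t1]
  have hna2 : ‖gx (x k) (y k)‖ ≤ ‖gx (x k) ystar‖ + Lxy * ‖y k - ystar‖ := by
    have h1 := hLxy' (x k) (y k) ystar
    have h2 : ‖gx (x k) (y k)‖ ≤ ‖gx (x k) (y k) - gx (x k) ystar‖ + ‖gx (x k) ystar‖ := by
      have := norm_add_le (gx (x k) (y k) - gx (x k) ystar) (gx (x k) ystar)
      simpa using this
    linarith only [h1, h2]
  have t2 : ‖gy (x k) ystar‖ ≤ Lxy * ‖x k - xstar‖ := by
    have h := hLyx (x k) xstar ystar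
    rwa [hst2, sub_zero] at h
  have hnb : ‖gy (x k) (y k)‖ ≤ ‖gy (x k) (y k) - gy (x k) ystar‖ + Lxy * ‖x k - xstar‖ := by
    have h2 : ‖gy (x k) (y k)‖ ≤ ‖gy (x k) (y k) - gy (x k) ystar‖ + ‖gy (x k) ystar‖ := by
      have := norm_add_le (gy (x k) (y k) - gy (x k) ystar) (gy (x k) ystar)
      simpa using this
    linarith only [h2, t2]
  have hnb2 : ‖gy (x k) (y k)‖ ≤ ‖gy xstar (y k)‖ + Lxy * ‖x k - xstar‖ := by
    have h1 := hLyx (x k) xstar (y k)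
    have h2 : ‖gy (x k) (y k)‖ ≤ ‖gy (x k) (y k) - gy xstar (y k)‖ + ‖gy xstar (y k)‖ := by
      have := norm_add_le (gy (x k) (y k) - gy xstar (y k)) (gy xstar (y k))
      simpa using this
    linarith only [h1, h2]
  have hGx2 : ‖gx (x k) (y k)‖^2 ≤ ‖gx (x k) (y k) - gx xstar (y k)‖^2 + ‖gx (x k) ystar‖^2
      + 2 * Lxy^2 * ‖y k - ystar‖^2 := by
    have e1 : ‖gx (x k) (y k)‖^2 ≤ (‖gx (x k) (y k) - gx xstar (y k)‖ + Lxy * ‖y k - ystar‖)^2 :=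
      pow_le_pow_left₀ (norm_nonneg _) hna 2
    have e2 : ‖gx (x k) (y k)‖^2 ≤ (‖gx (x k) ystar‖ + Lxy * ‖y k - ystar‖)^2 :=
      pow_le_pow_left₀ (norm_nonneg _) hna2 2
    nlinarith only [e1, e2, sq_nonneg (‖gx (x k) (y k) - gx xstar (y k)‖ - Lxy * ‖y k - ystar‖),
      sq_nonneg (‖gx (x k) ystar‖ - Lxy * ‖y k - ystar‖)]
  have hGy2 : ‖gy (x k) (y k)‖^2 ≤ ‖gy (x k) (y k) - gy (x k) ystar‖^2 + ‖gy xstar (y k)‖^2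
      + 2 * Lxy^2 * ‖x k - xstar‖^2 := by
    have e1 : ‖gy (x k) (y k)‖^2 ≤ (‖gy (x k) (y k) - gy (x k) ystar‖ + Lxy * ‖x k - xstar‖)^2 :=
      pow_le_pow_left₀ (norm_nonneg _) hnb 2
    have e2 : ‖gy (x k) (y k)‖^2 ≤ (‖gy xstar (y k)‖ + Lxy * ‖x k - xstar‖)^2 :=
      pow_le_pow_left₀ (norm_nonneg _) hnb2 2
    nlinarith only [e1, e2, sq_nonneg (‖gy (x k) (y k) - gy (x k) ystar‖ - Lxy * ‖x k - xstar‖),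
      sq_nonneg (‖gy xstar (y k)‖ - Lxy * ‖x k - xstar‖)]
  -- error term bound
  have hE := hrel (x k) (y k)
  have hcs1 : -⟪x k - xstar, gtx (x k) (y k) - gx (x k) (y k)⟫
      ≤ ‖x k - xstar‖ * ‖gtx (x k) (y k) - gx (x k) (y k)‖ := by
    have := abs_real_inner_le_norm (x k - xstar) (gtx (x k) (y k) - gx (x k) (y k))
    have h2 := (abs_le.1 this).1
    linarith only [h2]
  have hcs2 : ⟪y k - ystar, gty (x k) (y k) - gy (x k) (y k)⟫
      ≤ ‖y k - ystar‖ * ‖gty (x k) (y k) - gy (x k) (y k)‖ :=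
    real_inner_le_norm _ _
  have hkey : 2 * (‖x k - xstar‖ * ‖gtx (x k) (y k) - gx (x k) (y k)‖
        + ‖y k - ystar‖ * ‖gty (x k) (y k) - gy (x k) (y k)‖)
      ≤ η * α * (‖gx (x k) (y k)‖^2 + ‖gy (x k) (y k)‖^2)
        + (α/η) * (‖x k - xstar‖^2 + ‖y k - ystar‖^2) := by
    rcases hα₀.eq_or_lt with h0 | hαpos
    · have hE0 : α ^ 2 * (‖gx (x k) (y k)‖ ^ 2 + ‖gy (x k) (y k)‖ ^ 2) = 0 := by
        rw [← h0]; ring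
      have hEx : ‖gtx (x k) (y k) - gx (x k) (y k)‖ = 0 :=
        pow_eq_zero_iff two_ne_zero |>.1 (le_antisymm
          (by linarith only [hE, hE0, sq_nonneg ‖gty (x k) (y k) - gy (x k) (y k)‖]) (sq_nonneg _))
      have hEy : ‖gty (x k) (y k) - gy (x k) (y k)‖ = 0 :=
        pow_eq_zero_iff two_ne_zero |>.1 (le_antisymm
          (by linarith only [hE, hE0, sq_nonneg ‖gtx (x k) (y k) - gx (x k) (y k)‖]) (sq_nonneg _))
      rw [hEx, hEy, ← h0]
      simp
    · have h2 : α * η * (2 * (‖x k - xstar‖ * ‖gtx (x k) (y k) - gx (x k) (y k)‖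
            + ‖y k - ystar‖ * ‖gty (x k) (y k) - gy (x k) (y k)‖))
          ≤ α * η * (η * α * (‖gx (x k) (y k)‖^2 + ‖gy (x k) (y k)‖^2)
            + (α/η) * (‖x k - xstar‖^2 + ‖y k - ystar‖^2)) := by
        have hexp : α * η * (η * α * (‖gx (x k) (y k)‖^2 + ‖gy (x k) (y k)‖^2)
            + (α/η) * (‖x k - xstar‖^2 + ‖y k - ystar‖^2))
            = η^2 * α^2 * (‖gx (x k) (y k)‖^2 + ‖gy (x k) (y k)‖^2)
              + α^2 * (‖x k - xstar‖^2 + ‖y k - ystar‖^2) := by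
          field_simp
        rw [hexp]
        nlinarith only [sq_nonneg (η * ‖gtx (x k) (y k) - gx (x k) (y k)‖ - α * ‖x k - xstar‖),
          sq_nonneg (η * ‖gty (x k) (y k) - gy (x k) (y k)‖ - α * ‖y k - ystar‖),
          hE, sq_nonneg η, mul_pos hηpos hηpos, norm_nonneg (x k - xstar), norm_nonneg (y k - ystar),
          hαpos.le, hηpos.le]
      exact le_of_mul_le_mul_left h2 (by positivity)
  have herr : -2*⟪x k - xstar, gtx (x k) (y k) - gx (x k) (y k)⟫
        + 2*⟪y k - ystar, gty (x k) (y k) - gy (x k) (y k)⟫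
      ≤ η * α * (‖gx (x k) (y k)‖^2 + ‖gy (x k) (y k)‖^2)
        + (α/η) * (‖x k - xstar‖^2 + ‖y k - ystar‖^2) := by
    linarith only [hkey, hcs1, hcs2]
  -- step norm bound
  have htx : ‖gtx (x k) (y k)‖ ≤ ‖gx (x k) (y k)‖ + ‖gtx (x k) (y k) - gx (x k) (y k)‖ := by
    have := norm_add_le (gx (x k) (y k)) (gtx (x k) (y k) - gx (x k) (y k))
    simpa using this
  have hty : ‖gty (x k) (y k)‖ ≤ ‖gy (x k) (y k)‖ + ‖gty (x k) (y k) - gy (x k) (y k)‖ := by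
    have := norm_add_le (gy (x k) (y k)) (gty (x k) (y k) - gy (x k) (y k))
    simpa using this
  have htx2 : ‖gtx (x k) (y k)‖^2 ≤ (‖gx (x k) (y k)‖ + ‖gtx (x k) (y k) - gx (x k) (y k)‖)^2 :=
    pow_le_pow_left₀ (norm_nonneg _) htx 2
  have hty2 : ‖gty (x k) (y k)‖^2 ≤ (‖gy (x k) (y k)‖ + ‖gty (x k) (y k) - gy (x k) (y k)‖)^2 :=
    pow_le_pow_left₀ (norm_nonneg _) hty 2
  have hsum : (‖gx (x k) (y k)‖ + ‖gtx (x k) (y k) - gx (x k) (y k)‖)^2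
        + (‖gy (x k) (y k)‖ + ‖gty (x k) (y k) - gy (x k) (y k)‖)^2
      ≤ (1+α)^2 * (‖gx (x k) (y k)‖^2 + ‖gy (x k) (y k)‖^2) := by
    rcases hα₀.eq_or_lt with h0 | hαpos
    · have hE0 : α ^ 2 * (‖gx (x k) (y k)‖ ^ 2 + ‖gy (x k) (y k)‖ ^ 2) = 0 := by
        rw [← h0]; ring
      have hEx : ‖gtx (x k) (y k) - gx (x k) (y k)‖ = 0 :=
        pow_eq_zero_iff two_ne_zero |>.1 (le_antisymm
          (by linarith only [hE, hE0, sq_nonneg ‖gty (x k) (y k) - gy (x k) (y k)‖]) (sq_nonneg _))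
      have hEy : ‖gty (x k) (y k) - gy (x k) (y k)‖ = 0 :=
        pow_eq_zero_iff two_ne_zero |>.1 (le_antisymm
          (by linarith only [hE, hE0, sq_nonneg ‖gtx (x k) (y k) - gx (x k) (y k)‖]) (sq_nonneg _))
      rw [hEx, hEy, ← h0]
      ring_nf
      nlinarith only [sq_nonneg ‖gx (x k) (y k)‖, sq_nonneg ‖gy (x k) (y k)‖]
    · have h2 : α * ((‖gx (x k) (y k)‖ + ‖gtx (x k) (y k) - gx (x k) (y k)‖)^2
            + (‖gy (x k) (y k)‖ + ‖gty (x k) (y k) - gy (x k) (y k)‖)^2)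
          ≤ α * ((1+α)^2 * (‖gx (x k) (y k)‖^2 + ‖gy (x k) (y k)‖^2)) := by
        nlinarith only [sq_nonneg (α * ‖gx (x k) (y k)‖ - ‖gtx (x k) (y k) - gx (x k) (y k)‖),
          sq_nonneg (α * ‖gy (x k) (y k)‖ - ‖gty (x k) (y k) - gy (x k) (y k)‖),
          hE, hαpos.le, mul_pos hαpos hαpos, norm_nonneg (gx (x k) (y k)), norm_nonneg (gy (x k) (y k)),
          norm_nonneg (gtx (x k) (y k) - gx (x k) (y k)), norm_nonneg (gty (x k) (y k) - gy (x k) (y k))]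
      exact le_of_mul_le_mul_left h2 hαpos
  have hstepnorm : ηx * ‖gtx (x k) (y k)‖^2 + ηy * ‖gty (x k) (y k)‖^2
      ≤ η * (1+α)^2 * (‖gx (x k) (y k)‖^2 + ‖gy (x k) (y k)‖^2) := by
    have hT : ‖gtx (x k) (y k)‖^2 + ‖gty (x k) (y k)‖^2
        ≤ (1+α)^2 * (‖gx (x k) (y k)‖^2 + ‖gy (x k) (y k)‖^2) :=
      le_trans (add_le_add htx2 hty2) hsum
    have m1 : ηx * ‖gtx (x k) (y k)‖^2 ≤ η * ‖gtx (x k) (y k)‖^2 :=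
      mul_le_mul_of_nonneg_right (le_max_left _ _) (sq_nonneg _)
    have m2 : ηy * ‖gty (x k) (y k)‖^2 ≤ η * ‖gty (x k) (y k)‖^2 :=
      mul_le_mul_of_nonneg_right (le_max_right _ _) (sq_nonneg _)
    have m3 := mul_le_mul_of_nonneg_left hT hηpos.le
    linarith only [m1, m2, m3]
  -- final combination facts
  have hgbound : ‖gx (x k) (y k)‖^2 + ‖gy (x k) (y k)‖^2
      ≤ ‖gx (x k) (y k) - gx xstar (y k)‖^2 + ‖gx (x k) ystar‖^2
        + ‖gy (x k) (y k) - gy (x k) ystar‖^2 + ‖gy xstar (y k)‖^2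
        + 2 * Lxy^2 * (‖x k - xstar‖^2 + ‖y k - ystar‖^2) := by
    linarith only [hGx2, hGy2]
  have hmul1 : η * ((1+α)^2 + α) * (‖gx (x k) (y k)‖^2 + ‖gy (x k) (y k)‖^2)
      ≤ η * ((1+α)^2 + α) * (‖gx (x k) (y k) - gx xstar (y k)‖^2 + ‖gx (x k) ystar‖^2
        + ‖gy (x k) (y k) - gy (x k) ystar‖^2 + ‖gy xstar (y k)‖^2
        + 2 * Lxy^2 * (‖x k - xstar‖^2 + ‖y k - ystar‖^2)) :=
    mul_le_mul_of_nonneg_left hgbound (mul_nonneg hηpos.le hCpos.le)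
  have hmul2 : η * ((1+α)^2 + α) * (‖gx (x k) (y k) - gx xstar (y k)‖^2 + ‖gx (x k) ystar‖^2)
      ≤ 1/(2*Lx) * (‖gx (x k) (y k) - gx xstar (y k)‖^2 + ‖gx (x k) ystar‖^2) :=
    mul_le_mul_of_nonneg_right hsx (by positivity)
  have hmul3 : η * ((1+α)^2 + α) * (‖gy (x k) (y k) - gy (x k) ystar‖^2 + ‖gy xstar (y k)‖^2)
      ≤ 1/(2*Ly) * (‖gy (x k) (y k) - gy (x k) ystar‖^2 + ‖gy xstar (y k)‖^2) :=
    mul_le_mul_of_nonneg_right hsy (by positivity)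
  rw [keyx, keyy]
  linarith only [hsplitx, hsplity, herr, hstepnorm, hmul1, hmul2, hmul3, hScoco, hSmu]
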